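/- Let Γ be a nonempty parameter-bounded family of Hénon-form maps, and let R > 1 and ρ > 1 be such that every h ∈ Γ satisfies condition (A) for (R, ρ). For γ ∈ Γ^ℤ let G_γ⁺ be the pointwise limit of G_{γ,n}⁺ on ℂ² (which exists). Then: (1) for every γ ∈ Γ^ℤ and every z ∈ ℂ², G_γ⁺(z) = (deg γ₀)⁻¹ · G_{σ(γ)}⁺(γ₀(z)); and (2) for every γ ∈ Γ^ℤ there exist a constant r_γ⁺ ∈ ℝ and a bounded continuous function u_γ⁺ : V_R⁺ → ℝ such that G_γ⁺(x,y) = log|y| + r_γ⁺ + u_γ⁺(x,y) for all (x,y) ∈ V_R⁺, and for every ε > 0 there exists T > 0 such that |u_γ⁺(x,y)| < ε whenever (x,y) ∈ V_R⁺ and |y| > T. -/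

import Mathlib

open Complex Filter Set Topology MeasureTheory Bornology

noncomputable section

/-- A Hénon-form map `f(x,y) = (y + a, p(y) - δ x)` with `δ ≠ 0` and `deg p ≥ 2`. -/
structure HenonMap : Type where
  a : ℂ
  δ : ℂ
  p : Polynomial ℂ
  hδ : δ ≠ 0
  hdeg : 2 ≤ p.natDegree

namespace HenonMap

/-- The map itself. -/
def toFun (f : HenonMap) (z : ℂ × ℂ) : ℂ × ℂ :=
  (z.2 + f.a, f.p.eval z.2 - f.δ * z.1)

/-- The inverse map `f⁻¹(x,y) = (δ⁻¹ (p(x - a) - y), x - a)`. -/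
def invFun (f : HenonMap) (z : ℂ × ℂ) : ℂ × ℂ :=
  (f.δ⁻¹ * (f.p.eval (z.1 - f.a) - z.2), z.1 - f.a)

end HenonMap

/-- `V_R⁺ = {(x,y) : max(R,|x|) < |y|}`. -/
def VPlus (R : ℝ) : Set (ℂ × ℂ) := {z | max R (‖z.1‖) < ‖z.2‖}

/-- `V_R⁻ = {(x,y) : max(R,|y|) < |x|}`. -/
def VMinus (R : ℝ) : Set (ℂ × ℂ) := {z | max R (‖z.2‖) < ‖z.1‖}

/-- `D_R = {(x,y) : max(|x|,|y|) < R}`. -/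
def DDisk (R : ℝ) : Set (ℂ × ℂ) := {z | max (‖z.1‖) (‖z.2‖) < R}

/-- Condition (A) for `(R, ρ)`. -/
def CondA (f : HenonMap) (R ρ : ℝ) : Prop :=
  (∀ z ∈ closure (VPlus R),
    f.toFun z ∈ VPlus R ∧ ρ * ‖z.2‖ < ‖(f.toFun z).2‖) ∧
  (∀ z ∈ closure (VMinus R),
    f.invFun z ∈ VMinus R ∧ ρ * ‖z.1‖ < ‖(f.invFun z).1‖)

/-- A parameter-bounded family of Hénon-form maps. -/
def ParamBounded (Γ : Set HenonMap) : Prop :=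
  ∃ (D : ℕ) (A d₀ Δ m M : ℝ),
    2 ≤ D ∧ 0 ≤ A ∧ 0 < d₀ ∧ d₀ ≤ Δ ∧ 0 < m ∧ m ≤ M ∧
    ∀ f ∈ Γ,
      f.p.natDegree ≤ D ∧ ‖f.a‖ ≤ A ∧
      d₀ ≤ ‖f.δ‖ ∧ ‖f.δ‖ ≤ Δ ∧
      (∀ i : ℕ, ‖(f.p.coeff i)‖ ≤ M) ∧
      m ≤ ‖f.p.leadingCoeff‖

/-- Forward composition: `fwd γ n = γ_{n-1} ∘ ⋯ ∘ γ₀`. -/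
def fwd (γ : ℤ → HenonMap) : ℕ → (ℂ × ℂ) → ℂ × ℂ
  | 0 => id
  | n + 1 => fun z => (γ (n : ℤ)).toFun (fwd γ n z)

/-- Backward composition: `bwd γ n = γ_{-n}⁻¹ ∘ ⋯ ∘ γ_{-1}⁻¹`. -/
def bwd (γ : ℤ → HenonMap) : ℕ → (ℂ × ℂ) → ℂ × ℂ
  | 0 => id
  | n + 1 => fun z => (γ (-((n : ℤ) + 1))).invFun (bwd γ n z)

/-- `K_γ⁺` : points with bounded forward orbit. -/
def KPlus (γ : ℤ → HenonMap) : Set (ℂ × ℂ) :=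
  {z | IsBounded (Set.range fun n : ℕ => fwd γ n z)}

/-- `K_γ⁻` : points with bounded backward orbit. -/
def KMinus (γ : ℤ → HenonMap) : Set (ℂ × ℂ) :=
  {z | IsBounded (Set.range fun n : ℕ => bwd γ n z)}

/-- `I_γ⁺` : points whose forward orbit tends to infinity in norm. -/
def IPlus (γ : ℤ → HenonMap) : Set (ℂ × ℂ) :=
  {z | Tendsto (fun n : ℕ => ‖fwd γ n z‖) atTop atTop}

/-- `I_γ⁻` : points whose backward orbit tends to infinity in norm. -/
def IMinus (γ : ℤ → HenonMap) : Set (ℂ × ℂ) :=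
  {z | Tendsto (fun n : ℕ => ‖bwd γ n z‖) atTop atTop}

/-- The iterated shift: `(σⁿ γ)_j = γ_{j+n}`. -/
def shiftIter (γ : ℤ → HenonMap) (n : ℕ) : ℤ → HenonMap := fun j => γ (j + n)

/-- `log⁺ t = max (log t) 0`. -/
def logPlus (t : ℝ) : ℝ := max (Real.log t) 0

/-- `G_{γ,n}⁺(z) = (deg γ_{n-1} ⋯ deg γ₀)⁻¹ log⁺ ‖γ_{n-1} ∘ ⋯ ∘ γ₀ (z)‖`. -/
def GPlusN (γ : ℤ → HenonMap) (n : ℕ) (z : ℂ × ℂ) : ℝ :=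
  (∏ j ∈ Finset.range n, ((γ (j : ℤ)).p.natDegree : ℝ))⁻¹ * logPlus ‖fwd γ n z‖

/-- `G_{γ,n}⁻(z) = (deg γ_{-1} ⋯ deg γ_{-n})⁻¹ log⁺ ‖γ_{-n}⁻¹ ∘ ⋯ ∘ γ_{-1}⁻¹ (z)‖`. -/
def GMinusN (γ : ℤ → HenonMap) (n : ℕ) (z : ℂ × ℂ) : ℝ :=
  (∏ j ∈ Finset.range n, ((γ (-((j : ℤ) + 1))).p.natDegree : ℝ))⁻¹ * logPlus ‖bwd γ n z‖

private lemma henon_sub (f : HenonMap) (D : ℕ) (M Δ : ℝ)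
    (hD : f.p.natDegree ≤ D) (hM : ∀ i, ‖(f.p.coeff i)‖ ≤ M)
    (hΔ : ‖f.δ‖ ≤ Δ)
    (z : ℂ × ℂ) (hx : ‖z.1‖ ≤ ‖z.2‖)
    (hw : 1 ≤ ‖z.2‖) :
    ‖((f.toFun z).2 - f.p.leadingCoeff * z.2 ^ f.p.natDegree)‖
      ≤ (M * D + Δ) * ‖z.2‖ ^ (f.p.natDegree - 1) := by
  set d := f.p.natDegree with hd
  set w := z.2 with hwdef
  have hd2 : 2 ≤ d := f.hdeg
  have hM0 : 0 ≤ M := (norm_nonneg _).trans (hM 0)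
  have hev : f.p.eval w = (∑ i ∈ Finset.range d, f.p.coeff i * w ^ i)
      + f.p.leadingCoeff * w ^ d := by
    rw [Polynomial.eval_eq_sum_range, Finset.sum_range_succ, Polynomial.coeff_natDegree]
  have hexp : (f.toFun z).2 - f.p.leadingCoeff * w ^ d
      = (∑ i ∈ Finset.range d, f.p.coeff i * w ^ i) - f.δ * z.1 := by
    show (f.p.eval w - f.δ * z.1) - f.p.leadingCoeff * w ^ d = _
    rw [hev]; ring
  rw [hexp]
  have htri : ‖((∑ i ∈ Finset.range d, f.p.coeff i * w ^ i) - f.δ * z.1)‖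
      ≤ ‖(∑ i ∈ Finset.range d, f.p.coeff i * w ^ i)‖
        + ‖(f.δ * z.1)‖ := by
    simpa [sub_eq_add_neg] using
      norm_add_le (∑ i ∈ Finset.range d, f.p.coeff i * w ^ i) (-(f.δ * z.1))
  have hsum : ‖(∑ i ∈ Finset.range d, f.p.coeff i * w ^ i)‖
      ≤ (d : ℝ) * (M * ‖w‖ ^ (d - 1)) := by
    calc ‖(∑ i ∈ Finset.range d, f.p.coeff i * w ^ i)‖
        ≤ ∑ i ∈ Finset.range d, ‖(f.p.coeff i * w ^ i)‖ :=
          norm_sum_le _ _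
      _ ≤ ∑ _i ∈ Finset.range d, M * ‖w‖ ^ (d - 1) := by
          refine Finset.sum_le_sum fun i hi => ?_
          rw [norm_mul, norm_pow]
          have hle : ‖w‖ ^ i ≤ ‖w‖ ^ (d - 1) :=
            pow_le_pow_right₀ hw (by have := Finset.mem_range.mp hi; omega)
          exact mul_le_mul (hM i) hle (by positivity) hM0
      _ = (d : ℝ) * (M * ‖w‖ ^ (d - 1)) := by
          rw [Finset.sum_const, Finset.card_range, nsmul_eq_mul]
  have hδx : ‖(f.δ * z.1)‖ ≤ Δ * ‖w‖ ^ (d - 1) := by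
    rw [norm_mul]
    have h1 : ‖z.1‖ ≤ ‖w‖ ^ (d - 1) := by
      calc ‖z.1‖ ≤ ‖w‖ := hx
        _ = ‖w‖ ^ 1 := (pow_one _).symm
        _ ≤ ‖w‖ ^ (d - 1) := pow_le_pow_right₀ hw (by omega)
    exact mul_le_mul hΔ h1 (norm_nonneg _) ((norm_nonneg _).trans hΔ)
  have hdD : (d : ℝ) ≤ (D : ℝ) := Nat.cast_le.mpr hD
  have hpow0 : (0:ℝ) ≤ ‖w‖ ^ (d - 1) := by positivity
  nlinarith [htri, hsum, hδx, mul_le_mul_of_nonneg_right hdD (mul_nonneg hM0 hpow0)]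

private lemma abs_log_le_of_abs_sub_one_le {q t : ℝ} (ht : t ≤ 1/2) (h : |q - 1| ≤ t) :
    |Real.log q| ≤ 2 * t := by
  have ht0 : 0 ≤ t := (abs_nonneg _).trans h
  obtain ⟨h1, h2⟩ := abs_le.mp h
  have hq : (0:ℝ) < q := by linarith
  rw [abs_le]
  constructor
  · have hlog : Real.log q⁻¹ ≤ q⁻¹ - 1 := Real.log_le_sub_one_of_pos (by positivity)
    rw [Real.log_inv] at hlog
    have key : 1/q ≤ 1 + 2*t := (div_le_iff₀ hq).mpr (by nlinarith)
    have h1q : q⁻¹ = 1/q := (one_div q).symm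
    linarith
  · have := Real.log_le_sub_one_of_pos hq
    linarith

/-- `elog f z = log|π₂(f z)| - log|c₀| - d log|z.2|`. -/
private def elog (f : HenonMap) (z : ℂ × ℂ) : ℝ :=
  Real.log (‖(f.toFun z).2‖) - Real.log (‖f.p.leadingCoeff‖)
    - f.p.natDegree * Real.log (‖z.2‖)

private lemma henon_far (f : HenonMap) (D : ℕ) (M Δ m : ℝ) (hm : 0 < m)
    (hD : f.p.natDegree ≤ D) (hM : ∀ i, ‖(f.p.coeff i)‖ ≤ M)
    (hΔ : ‖f.δ‖ ≤ Δ) (hc : m ≤ ‖f.p.leadingCoeff‖)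
    (z : ℂ × ℂ) (hx : ‖z.1‖ ≤ ‖z.2‖)
    (hw : 1 ≤ ‖z.2‖)
    (hbig : 2 * ((M * D + Δ) / m) ≤ ‖z.2‖) :
    |elog f z| ≤ 2 * ((M * D + Δ) / m) / ‖z.2‖ := by
  set d := f.p.natDegree with hddef
  set K := M * (D:ℝ) + Δ with hKdef
  have hd2 : 2 ≤ d := f.hdeg
  have hM0 : 0 ≤ M := (norm_nonneg _).trans (hM 0)
  have hΔ0 : 0 < Δ := lt_of_lt_of_le (norm_pos_iff.mpr f.hδ) hΔ
  have hK0 : 0 < K := by positivity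
  have hw0 : (0:ℝ) < ‖z.2‖ := lt_of_lt_of_le one_pos hw
  have hc0 : (0:ℝ) < ‖f.p.leadingCoeff‖ := lt_of_lt_of_le hm hc
  set c := ‖f.p.leadingCoeff‖ with hcdef
  set aw := ‖z.2‖ with hawdef
  have hden : (0:ℝ) < c * aw ^ d := by positivity
  set q := ‖(f.toFun z).2‖ / (c * aw ^ d) with hqdef
  set t := K / m / aw with htdef
  have ht0 : 0 < t := by positivity
  have habs : ‖((f.toFun z).2 - f.p.leadingCoeff * z.2 ^ d)‖
      ≤ K * aw ^ (d - 1) := henon_sub f D M Δ hD hM hΔ z hx hw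
  have hpowsplit : aw ^ d = aw ^ (d-1) * aw := by
    rw [← pow_succ]; congr 1; omega
  have hqsub : |q - 1| ≤ t := by
    have h1 : |‖(f.toFun z).2‖ - c * aw ^ d|
        ≤ K * aw ^ (d - 1) := by
      refine le_trans ?_ habs
      have := abs_norm_sub_norm_le (f.toFun z).2 (f.p.leadingCoeff * z.2 ^ d)
      rwa [norm_mul, norm_pow] at this
    have h3 : q - 1 = (‖(f.toFun z).2‖ - c * aw ^ d) / (c * aw ^ d) := by
      rw [hqdef]; exact div_sub_one hden.ne'
    rw [h3, abs_div, abs_of_pos hden, div_le_iff₀ hden]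
    have hm' : m ≠ 0 := hm.ne'
    have haw' : aw ≠ 0 := hw0.ne'
    have ht' : t * (c * aw ^ d) = K * (c/m) * aw ^ (d-1) := by
      rw [htdef, hpowsplit]; field_simp
    have hcm : 1 ≤ c/m := (one_le_div hm).mpr hc
    have hpow0 : (0:ℝ) ≤ aw ^ (d-1) := by positivity
    rw [ht']
    have hK2 : K * aw ^ (d-1) ≤ K * (c/m) * aw ^ (d-1) := by
      nlinarith [mul_nonneg (mul_nonneg (sub_nonneg.mpr hcm) hK0.le) hpow0]
    exact le_trans h1 hK2
  have ht12 : t ≤ 1/2 := by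
    rw [htdef, div_le_iff₀ hw0]; linarith
  have hlogq : |Real.log q| ≤ 2 * t := abs_log_le_of_abs_sub_one_le ht12 hqsub
  have hq2 : (0:ℝ) < q := by
    have := (abs_le.mp hqsub).1; linarith
  have hY' : 0 < ‖(f.toFun z).2‖ := by
    rcases div_pos_iff.mp (hqdef ▸ hq2) with ⟨h, _⟩ | ⟨_, h⟩
    · exact h
    · exact absurd hden (not_lt.mpr h.le)
  have hlogeq : Real.log q = elog f z := by
    rw [hqdef, Real.log_div hY'.ne' hden.ne',
      Real.log_mul hc0.ne' (by positivity), Real.log_pow, elog]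
    ring
  rw [hlogeq] at hlogq
  calc |elog f z| ≤ 2 * t := hlogq
    _ = 2 * ((M * ↑D + Δ) / m) / aw := by rw [htdef, hKdef]; ring

private lemma henon_ebound (f : HenonMap) (D : ℕ) (M Δ m R ρ : ℝ) (hm : 0 < m)
    (hR : 1 < R) (hρ : 1 < ρ)
    (hD : f.p.natDegree ≤ D) (hM : ∀ i, ‖(f.p.coeff i)‖ ≤ M)
    (hΔ : ‖f.δ‖ ≤ Δ) (hc : m ≤ ‖f.p.leadingCoeff‖)
    (hcond : CondA f R ρ)
    (K W CE : ℝ) (hK : K = M * D + Δ) (hW : W = max (2 * (K/m)) R)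
    (hCE : CE = |Real.log ((M + K) * W ^ D)| + |Real.log m| + |Real.log M|
      + D * Real.log W + 1)
    (z : ℂ × ℂ) (hz : z ∈ VPlus R) :
    |elog f z| ≤ CE ∧ (W ≤ ‖z.2‖ → |elog f z| ≤ 2 * (K/m) / ‖z.2‖) := by
  have hM0 : 0 ≤ M := (norm_nonneg _).trans (hM 0)
  have hΔ0 : 0 < Δ := lt_of_lt_of_le (norm_pos_iff.mpr f.hδ) hΔ
  have hK0 : 0 < K := by rw [hK]; positivity
  have hd2 : 2 ≤ f.p.natDegree := f.hdeg
  have hdD : (f.p.natDegree : ℝ) ≤ (D : ℝ) := Nat.cast_le.mpr hD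
  have hzv : max R (‖z.1‖) < ‖z.2‖ := hz
  have hwR : R < ‖z.2‖ := lt_of_le_of_lt (le_max_left _ _) hzv
  have hx : ‖z.1‖ ≤ ‖z.2‖ :=
    le_of_lt (lt_of_le_of_lt (le_max_right _ _) hzv)
  have hw1 : 1 ≤ ‖z.2‖ := le_of_lt (lt_trans hR hwR)
  have haw0 : (0:ℝ) < ‖z.2‖ := lt_of_lt_of_le one_pos hw1
  have hW1 : 1 < W := lt_of_lt_of_le hR (hW ▸ le_max_right _ _)
  have hWK : 2 * (K/m) ≤ W := hW ▸ le_max_left _ _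
  have hlogW0 : 0 ≤ Real.log W := Real.log_nonneg hW1.le
  have hfar : W ≤ ‖z.2‖ → |elog f z| ≤ 2 * (K/m) / ‖z.2‖ := by
    intro hbig
    have := henon_far f D M Δ m hm hD hM hΔ hc z hx hw1
      (by rw [← hK] at *; linarith)
    calc |elog f z| ≤ 2 * ((M * ↑D + Δ) / m) / ‖z.2‖ := this
      _ = 2 * (K/m) / ‖z.2‖ := by rw [hK]
  refine ⟨?_, hfar⟩
  have hCE0 : (1:ℝ) ≤ CE := by
    rw [hCE]
    have : (0:ℝ) ≤ D * Real.log W := by positivity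
    have h1 := abs_nonneg (Real.log ((M + K) * W ^ D))
    have h2 := abs_nonneg (Real.log m)
    have h3 := abs_nonneg (Real.log M)
    linarith
  by_cases hbig : W ≤ ‖z.2‖
  · have h1 := hfar hbig
    have hWpos : (0:ℝ) < W := lt_trans one_pos hW1
    have h2 : 2 * (K/m) / ‖z.2‖ ≤ 1 := by
      rw [div_le_one haw0]; linarith
    linarith
  · push_neg at hbig
    -- near case: R < |z.2| ≤ W
    have hy' := (hcond.1 z (subset_closure hz)).2
    set aw := ‖z.2‖ with hawdef
    set Y := ‖(f.toFun z).2‖ with hYdef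
    have hY1 : 1 ≤ Y := by nlinarith
    have hY0 : 0 < Y := lt_of_lt_of_le one_pos hY1
    have hlogY0 : 0 ≤ Real.log Y := Real.log_nonneg hY1
    -- upper bound on Y
    have hsub := henon_sub f D M Δ hD hM hΔ z hx hw1
    have hcM : ‖f.p.leadingCoeff‖ ≤ M := by
      rw [Polynomial.leadingCoeff]; exact hM _
    have hpowle : ∀ k : ℕ, k ≤ D → ‖z.2‖ ^ k ≤ W ^ D := by
      intro k hk
      calc ‖z.2‖ ^ k ≤ W ^ k := pow_le_pow_left₀ haw0.le hbig.le k
        _ ≤ W ^ D := pow_le_pow_right₀ hW1.le hk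
    have hYup : Y ≤ (M + K) * W ^ D := by
      have htri : Y ≤ ‖((f.toFun z).2 - f.p.leadingCoeff * z.2 ^ f.p.natDegree)‖
          + ‖(f.p.leadingCoeff * z.2 ^ f.p.natDegree)‖ := by
        have := norm_add_le ((f.toFun z).2 - f.p.leadingCoeff * z.2 ^ f.p.natDegree)
          (f.p.leadingCoeff * z.2 ^ f.p.natDegree)
        simpa using this
      have h4 : ‖(f.p.leadingCoeff * z.2 ^ f.p.natDegree)‖ ≤ M * W ^ D := by
        rw [norm_mul, norm_pow]
        exact mul_le_mul hcM (hpowle _ hD) (by positivity) hM0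
      have h5 : (M * ↑D + Δ) * ‖z.2‖ ^ (f.p.natDegree - 1) ≤ K * W ^ D := by
        rw [hK]
        exact mul_le_mul_of_nonneg_left (hpowle _ (by omega)) (by positivity)
      linarith
    have hlogYup : Real.log Y ≤ |Real.log ((M + K) * W ^ D)| :=
      le_trans (Real.log_le_log hY0 hYup) (le_abs_self _)
    -- bounds on log c and log aw
    have hc0 : (0:ℝ) < ‖f.p.leadingCoeff‖ := lt_of_lt_of_le hm hc
    have hlogc_lo : -|Real.log m| ≤ Real.log (‖f.p.leadingCoeff‖) :=
      le_trans (neg_abs_le _) (Real.log_le_log hm hc)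
    have hlogc_hi : Real.log (‖f.p.leadingCoeff‖) ≤ |Real.log M| :=
      le_trans (Real.log_le_log hc0 hcM) (le_abs_self _)
    have hlogaw0 : 0 ≤ Real.log aw := Real.log_nonneg hw1
    have hlogawW : Real.log aw ≤ Real.log W := Real.log_le_log haw0 hbig.le
    have hdlog : (f.p.natDegree : ℝ) * Real.log aw ≤ D * Real.log W := by
      apply mul_le_mul hdD hlogawW hlogaw0 (Nat.cast_nonneg D)
    have hdlog0 : 0 ≤ (f.p.natDegree : ℝ) * Real.log aw := by positivity
    rw [elog, abs_le]
    have ha1 := abs_nonneg (Real.log ((M + K) * W ^ D))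
    have ha2 := abs_nonneg (Real.log m)
    have ha3 := abs_nonneg (Real.log M)
    constructor
    · rw [hCE]
      simp only [← hYdef, ← hawdef]
      linarith
    · rw [hCE]
      simp only [← hYdef, ← hawdef]
      linarith

private lemma summable_half_pow (B : ℝ) : Summable (fun k : ℕ => B * (1/2:ℝ)^k) :=
  summable_geometric_two.mul_left B

private lemma tsum_bound {f : ℕ → ℝ} (B : ℝ) (hB : ∀ k, |f k| ≤ B * (1/2)^k) :
    |∑' k, f k| ≤ 2 * B ∧ Summable f := by
  have hs : Summable (fun k : ℕ => B * (1/2:ℝ)^k) := summable_half_pow B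
  have hf : Summable f :=
    Summable.of_norm_bounded hs (by simpa [Real.norm_eq_abs] using hB)
  refine ⟨?_, hf⟩
  have habs : Summable (fun k => |f k|) := hf.abs
  have hnorm : Summable (fun k => ‖f k‖) := by
    simp only [Real.norm_eq_abs]; exact habs
  have h0 : ‖∑' k, f k‖ ≤ ∑' k, ‖f k‖ := norm_tsum_le_tsum_norm hnorm
  simp only [Real.norm_eq_abs] at h0
  calc |∑' k, f k| ≤ ∑' k, |f k| := h0
    _ ≤ ∑' k, B * (1/2:ℝ)^k := Summable.tsum_le_tsum hB habs hs
    _ = B * 2 := by rw [tsum_mul_left, tsum_geometric_two]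
    _ = 2 * B := mul_comm _ _

private lemma orbit_mem (γ : ℤ → HenonMap) (R ρ : ℝ) (hρ : 1 ≤ ρ)
    (hA : ∀ k : ℕ, CondA (γ (k:ℤ)) R ρ) (z : ℂ × ℂ) (hz : z ∈ VPlus R) :
    ∀ n : ℕ, fwd γ n z ∈ VPlus R ∧ ρ ^ n * ‖z.2‖ ≤ ‖((fwd γ n z).2)‖ := by
  intro n
  induction n with
  | zero => exact ⟨hz, by simp [fwd]⟩
  | succ n ih =>
    have h1 := (hA n).1 (fwd γ n z) (subset_closure ih.1)
    refine ⟨h1.1, ?_⟩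
    have hρ0 : (0:ℝ) ≤ ρ := le_trans zero_le_one hρ
    have he : ρ ^ (n+1) * ‖z.2‖ = ρ * (ρ^n * ‖z.2‖) := by ring
    rw [he]
    calc ρ * (ρ^n * ‖z.2‖) ≤ ρ * ‖((fwd γ n z).2)‖ :=
          mul_le_mul_of_nonneg_left ih.2 hρ0
      _ ≤ ‖((fwd γ (n+1) z).2)‖ := le_of_lt h1.2

private lemma fwd_shift (γ : ℤ → HenonMap) (z : ℂ × ℂ) :
    ∀ n : ℕ, fwd (shiftIter γ 1) n ((γ 0).toFun z) = fwd γ (n+1) z := by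
  intro n
  induction n with
  | zero => simp [fwd]
  | succ n ih =>
    have hcast : ((n:ℤ)) + ((1:ℕ):ℤ) = ((n+1:ℕ):ℤ) := by omega
    have hsh : shiftIter γ 1 (n:ℤ) = γ ((n+1:ℕ):ℤ) := by
      unfold shiftIter; rw [hcast]
    show (shiftIter γ 1 (n:ℤ)).toFun (fwd (shiftIter γ 1) n ((γ 0).toFun z))
      = (γ ((n+1:ℕ):ℤ)).toFun (fwd γ (n+1) z)
    rw [hsh, ih]

private def Pprod (γ : ℤ → HenonMap) (n : ℕ) : ℝ :=
  ∏ j ∈ Finset.range n, ((γ (j:ℤ)).p.natDegree : ℝ)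

private lemma Pprod_succ (γ : ℤ → HenonMap) (n : ℕ) :
    Pprod γ (n+1) = Pprod γ n * ((γ (n:ℤ)).p.natDegree : ℝ) :=
  Finset.prod_range_succ _ _

private lemma Pprod_ge (γ : ℤ → HenonMap) (hdeg : ∀ k : ℕ, 2 ≤ (γ (k:ℤ)).p.natDegree) :
    ∀ n : ℕ, (2:ℝ)^n ≤ Pprod γ n := by
  intro n
  induction n with
  | zero => simp [Pprod]
  | succ n ih =>
    rw [Pprod_succ, pow_succ]
    have h2 : (2:ℝ) ≤ ((γ (n:ℤ)).p.natDegree : ℝ) := by exact_mod_cast hdeg n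
    have hp : (0:ℝ) < (2:ℝ)^n := by positivity
    nlinarith

private lemma Pprod_pos (γ : ℤ → HenonMap) (hdeg : ∀ k : ℕ, 2 ≤ (γ (k:ℤ)).p.natDegree)
    (n : ℕ) : 0 < Pprod γ n :=
  lt_of_lt_of_le (by positivity) (Pprod_ge γ hdeg n)

private lemma Pprod_inv_le (γ : ℤ → HenonMap) (hdeg : ∀ k : ℕ, 2 ≤ (γ (k:ℤ)).p.natDegree)
    (k : ℕ) : (Pprod γ (k+1))⁻¹ ≤ (1/2:ℝ)^k := by
  have h1 : (2:ℝ)^k ≤ Pprod γ (k+1) := by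
    calc (2:ℝ)^k ≤ (2:ℝ)^(k+1) := by
          apply pow_le_pow_right₀ one_le_two (Nat.le_succ k)
      _ ≤ Pprod γ (k+1) := Pprod_ge γ hdeg (k+1)
  have h2 : (0:ℝ) < (2:ℝ)^k := by positivity
  calc (Pprod γ (k+1))⁻¹ ≤ ((2:ℝ)^k)⁻¹ := by
        apply inv_anti₀ h2 h1
    _ = (1/2:ℝ)^k := by rw [one_div, inv_pow]

private lemma prod_deg_shift (γ : ℤ → HenonMap) (n : ℕ) :
    Pprod γ (n+1)
      = ((γ 0).p.natDegree : ℝ) * Pprod (shiftIter γ 1) n := by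
  unfold Pprod
  rw [Finset.prod_range_succ']
  have h1 : ∀ j ∈ Finset.range n,
      ((γ ((j+1:ℕ):ℤ)).p.natDegree : ℝ) = ((shiftIter γ 1 (j:ℤ)).p.natDegree : ℝ) := by
    intro j _
    have hc : ((j+1:ℕ):ℤ) = (j:ℤ) + ((1:ℕ):ℤ) := by omega
    rw [hc]; rfl
  rw [Finset.prod_congr rfl h1, mul_comm]
  norm_num

private lemma GPlusN_succ (γ : ℤ → HenonMap) (n : ℕ) (z : ℂ × ℂ) :
    GPlusN γ (n+1) z
      = (((γ 0).p.natDegree : ℝ))⁻¹ * GPlusN (shiftIter γ 1) n ((γ 0).toFun z) := by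
  show (Pprod γ (n+1))⁻¹ * logPlus ‖fwd γ (n+1) z‖
    = (((γ 0).p.natDegree : ℝ))⁻¹ * ((Pprod (shiftIter γ 1) n)⁻¹ * logPlus ‖fwd (shiftIter γ 1) n ((γ 0).toFun z)‖)
  rw [fwd_shift, prod_deg_shift, mul_inv]
  ring

private lemma GPlusN_eq_log (γ : ℤ → HenonMap) (R : ℝ) (hR : 1 < R) (n : ℕ) (z : ℂ × ℂ)
    (hmem : fwd γ n z ∈ VPlus R) :
    GPlusN γ n z = (Pprod γ n)⁻¹ * Real.log (‖((fwd γ n z).2)‖) := by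
  show (Pprod γ n)⁻¹ * logPlus ‖fwd γ n z‖ = _
  have hmax : max R (‖((fwd γ n z).1)‖) < ‖((fwd γ n z).2)‖ := hmem
  have hx : ‖((fwd γ n z).1)‖ ≤ ‖((fwd γ n z).2)‖ :=
    le_of_lt (lt_of_le_of_lt (le_max_right _ _) hmax)
  have hy : 1 < ‖((fwd γ n z).2)‖ :=
    lt_trans hR (lt_of_le_of_lt (le_max_left _ _) hmax)
  have hnorm : ‖fwd γ n z‖ = ‖((fwd γ n z).2)‖ := by
    rw [Prod.norm_def]
    exact max_eq_right hx
  rw [hnorm]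
  congr 1
  exact max_eq_left (Real.log_nonneg hy.le)

private def eterm (γ : ℤ → HenonMap) (k : ℕ) (z : ℂ × ℂ) : ℝ :=
  (Pprod γ (k+1))⁻¹ * elog (γ (k:ℤ)) (fwd γ k z)

private def cterm (γ : ℤ → HenonMap) (k : ℕ) : ℝ :=
  (Pprod γ (k+1))⁻¹ * Real.log (‖(γ (k:ℤ)).p.leadingCoeff‖)

private lemma step_eq (γ : ℤ → HenonMap) (hdeg : ∀ k : ℕ, 2 ≤ (γ (k:ℤ)).p.natDegree)
    (k : ℕ) (z : ℂ × ℂ) :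
    cterm γ k + eterm γ k z
      = (Pprod γ (k+1))⁻¹ * Real.log (‖((fwd γ (k+1) z).2)‖)
        - (Pprod γ k)⁻¹ * Real.log (‖((fwd γ k z).2)‖) := by
  have hP : Pprod γ k ≠ 0 := (Pprod_pos γ hdeg k).ne'
  have hd : ((γ (k:ℤ)).p.natDegree : ℝ) ≠ 0 := by
    have := hdeg k; positivity
  have hf : (fwd γ (k+1) z).2 = ((γ (k:ℤ)).toFun (fwd γ k z)).2 := rfl
  unfold cterm eterm elog
  rw [hf, Pprod_succ]
  field_simp
  ring


/-- the functional equation for `G_γ⁺` and its expansion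
`G_γ⁺ = log|y| + r_γ⁺ + u_γ⁺` on `V_R⁺` with `u_γ⁺` bounded, continuous, vanishing at
infinity. -/
theorem stmt_12 (Γ : Set HenonMap) (hne : Γ.Nonempty) (hΓ : ParamBounded Γ)
    (R ρ : ℝ) (hR : 1 < R) (hρ : 1 < ρ) (hA : ∀ h ∈ Γ, CondA h R ρ)
    (G : (ℤ → HenonMap) → (ℂ × ℂ) → ℝ)
    (hG : ∀ γ : ℤ → HenonMap, (∀ j : ℤ, γ j ∈ Γ) → ∀ z : ℂ × ℂ,
      Filter.Tendsto (fun n : ℕ => GPlusN γ n z) Filter.atTop (nhds (G γ z))) :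
    (∀ γ : ℤ → HenonMap, (∀ j : ℤ, γ j ∈ Γ) → ∀ z : ℂ × ℂ,
      G γ z = (((γ 0).p.natDegree : ℝ))⁻¹ * G (shiftIter γ 1) ((γ 0).toFun z)) ∧
    (∀ γ : ℤ → HenonMap, (∀ j : ℤ, γ j ∈ Γ) →
      ∃ (r : ℝ) (u : ℂ × ℂ → ℝ),
        ContinuousOn u (VPlus R) ∧
        (∃ C : ℝ, ∀ z ∈ VPlus R, |u z| ≤ C) ∧
        (∀ z ∈ VPlus R, G γ z = Real.log (‖z.2‖) + r + u z) ∧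
        (∀ ε : ℝ, 0 < ε → ∃ T : ℝ, 0 < T ∧
          ∀ z ∈ VPlus R, T < ‖z.2‖ → |u z| < ε)) := by
  obtain ⟨D, A, d₀, Δ, m, M, hD2, hA0, hd₀, hd₀Δ, hm, hmM, hbound⟩ := hΓ
  constructor
  · -- (1) the functional equation
    intro γ hγ z
    have h1 := hG γ hγ z
    have hσ : ∀ j : ℤ, shiftIter γ 1 j ∈ Γ := fun j => hγ _
    have h2 := hG (shiftIter γ 1) hσ ((γ 0).toFun z)
    have h3 : Tendsto (fun n : ℕ => GPlusN γ (n+1) z) atTop (nhds (G γ z)) :=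
      h1.comp (tendsto_add_atTop_nat 1)
    have h4 : Tendsto (fun n : ℕ => GPlusN γ (n+1) z) atTop
        (nhds ((((γ 0).p.natDegree : ℝ))⁻¹ * G (shiftIter γ 1) ((γ 0).toFun z))) := by
      simp only [GPlusN_succ]
      exact h2.const_mul _
    exact tendsto_nhds_unique h3 h4
  · -- (2) the expansion on V_R⁺
    intro γ hγ
    have hdeg : ∀ k : ℕ, 2 ≤ (γ (k:ℤ)).p.natDegree := fun k => (γ _).hdeg
    have hcond : ∀ k : ℕ, CondA (γ (k:ℤ)) R ρ := fun k => hA _ (hγ _)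
    set K := M * (D:ℝ) + Δ with hK
    set W := max (2 * (K/m)) R with hW
    set CE := |Real.log ((M + K) * W ^ D)| + |Real.log m| + |Real.log M|
      + (D:ℝ) * Real.log W + 1 with hCE
    set Lc := |Real.log m| + |Real.log M| with hLc
    have hΔ0 : 0 < Δ := lt_of_lt_of_le hd₀ hd₀Δ
    have hM0 : 0 < M := lt_of_lt_of_le hm hmM
    have hK0 : 0 < K := by rw [hK]; positivity
    have hKm0 : 0 < K/m := by positivity
    have hW1 : 1 < W := lt_of_lt_of_le hR (le_max_right _ _)
    have hW0 : 0 < W := lt_trans one_pos hW1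
    have horb := fun z hz => orbit_mem γ R ρ hρ.le hcond z hz
    -- per-step bounds for elog along the orbit
    have hE : ∀ (k : ℕ) (w : ℂ × ℂ), w ∈ VPlus R →
        |elog (γ (k:ℤ)) w| ≤ CE ∧
        (W ≤ ‖w.2‖ → |elog (γ (k:ℤ)) w| ≤ 2*(K/m)/‖w.2‖) := by
      intro k w hw
      obtain ⟨hfD, _, _, hfΔ, hfM, hfc⟩ := hbound _ (hγ (k:ℤ))
      exact henon_ebound _ D M Δ m R ρ hm hR hρ hfD hfM hfΔ hfc (hcond k) K W CE hK hW hCE w hw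
    have hEk : ∀ z ∈ VPlus R, ∀ k : ℕ,
        |eterm γ k z| ≤ CE * (1/2)^k
        ∧ (W ≤ ‖z.2‖ →
            |eterm γ k z| ≤ (2*(K/m)/‖z.2‖) * (1/2)^k) := by
      intro z hz k
      have hmem := (horb z hz k).1
      have hbig := (horb z hz k).2
      have hPinv := Pprod_inv_le γ hdeg k
      have hPpos : 0 < (Pprod γ (k+1))⁻¹ := inv_pos.mpr (Pprod_pos γ hdeg (k+1))
      have he := hE k (fwd γ k z) hmem
      have hz2 : 0 < ‖z.2‖ := by
        have : max R (‖z.1‖) < ‖z.2‖ := hz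
        have := lt_of_le_of_lt (le_max_left _ _) this
        linarith
      have hρk : (1:ℝ) ≤ ρ^k := one_le_pow₀ hρ.le
      have hzyk : ‖z.2‖ ≤ ‖((fwd γ k z).2)‖ := by
        have : ‖z.2‖ ≤ ρ^k * ‖z.2‖ := by nlinarith
        linarith
      constructor
      · unfold eterm
        rw [abs_mul, abs_of_pos hPpos]
        calc (Pprod γ (k+1))⁻¹ * |elog (γ (k:ℤ)) (fwd γ k z)| ≤ (1/2)^k * CE :=
              mul_le_mul hPinv he.1 (abs_nonneg _) (by positivity)
          _ = CE * (1/2)^k := mul_comm _ _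
      · intro hWz
        have hyk : W ≤ ‖((fwd γ k z).2)‖ := le_trans hWz hzyk
        have h2 := he.2 hyk
        have h3 : 2*(K/m)/‖((fwd γ k z).2)‖ ≤ 2*(K/m)/‖z.2‖ := by
          gcongr
        unfold eterm
        rw [abs_mul, abs_of_pos hPpos]
        calc (Pprod γ (k+1))⁻¹ * |elog (γ (k:ℤ)) (fwd γ k z)|
            ≤ (1/2)^k * (2*(K/m)/‖z.2‖) :=
              mul_le_mul hPinv (le_trans h2 h3) (abs_nonneg _) (by positivity)
          _ = (2*(K/m)/‖z.2‖) * (1/2)^k := mul_comm _ _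
    -- bound on cterm
    have hck : ∀ k, |cterm γ k| ≤ Lc * (1/2)^k := by
      intro k
      obtain ⟨_, _, _, _, hfM, hfc⟩ := hbound _ (hγ (k:ℤ))
      have hcM : ‖(γ (k:ℤ)).p.leadingCoeff‖ ≤ M := by
        rw [Polynomial.leadingCoeff]; exact hfM _
      have hc0 : 0 < ‖(γ (k:ℤ)).p.leadingCoeff‖ := lt_of_lt_of_le hm hfc
      have hPinv := Pprod_inv_le γ hdeg k
      have hPpos : 0 < (Pprod γ (k+1))⁻¹ := inv_pos.mpr (Pprod_pos γ hdeg (k+1))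
      have hlab : |Real.log (‖(γ (k:ℤ)).p.leadingCoeff‖)| ≤ Lc := by
        rw [hLc, abs_le]
        have h1 := Real.log_le_log hm hfc
        have h2 := Real.log_le_log hc0 hcM
        have h3 := neg_abs_le (Real.log m)
        have h4 := le_abs_self (Real.log M)
        have h5 := abs_nonneg (Real.log M)
        have h6 := abs_nonneg (Real.log m)
        constructor <;> linarith
      unfold cterm
      rw [abs_mul, abs_of_pos hPpos]
      calc (Pprod γ (k+1))⁻¹ * |Real.log (‖(γ (k:ℤ)).p.leadingCoeff‖)|
          ≤ (1/2)^k * Lc := mul_le_mul hPinv hlab (abs_nonneg _) (by positivity)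
        _ = Lc * (1/2)^k := mul_comm _ _
    have hsc : Summable (cterm γ) := (tsum_bound Lc hck).2
    refine ⟨∑' k, cterm γ k, fun z => ∑' k, eterm γ k z, ?_, ⟨2*CE, ?_⟩, ?_, ?_⟩
    · -- continuity
      have hfwd_cont : ∀ n, Continuous (fwd γ n) := by
        intro n
        induction n with
        | zero => exact continuous_id
        | succ n ih =>
          have htf : Continuous ((γ (n:ℤ)).toFun) := by
            unfold HenonMap.toFun
            exact Continuous.prodMk (continuous_snd.add continuous_const)
              (((γ (n:ℤ)).p.continuous.comp continuous_snd).sub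
                (continuous_const.mul continuous_fst))
          show Continuous fun z => (γ (n:ℤ)).toFun (fwd γ n z)
          exact htf.comp ih
      have hlogc : ∀ n, ContinuousOn
          (fun z => Real.log (‖((fwd γ n z).2)‖)) (VPlus R) := by
        intro n z hz
        have hmem : max R (‖((fwd γ n z).1)‖) < ‖((fwd γ n z).2)‖ :=
          (horb z hz n).1
        have hpos : ‖((fwd γ n z).2)‖ ≠ 0 := by
          have h1 : R < ‖((fwd γ n z).2)‖ := lt_of_le_of_lt (le_max_left _ _) hmem
          have : (0:ℝ) < ‖((fwd γ n z).2)‖ := by linarith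
          exact this.ne'
        apply ContinuousAt.continuousWithinAt
        have habs : Continuous fun w => ‖((fwd γ n w).2)‖ :=
          continuous_norm.comp (continuous_snd.comp (hfwd_cont n))
        show ContinuousAt (Real.log ∘ fun w => ‖((fwd γ n w).2)‖) z
        exact ContinuousAt.comp (Real.continuousAt_log hpos) habs.continuousAt
      apply continuousOn_tsum (u := fun k => CE * (1/2:ℝ)^k)
      · intro k
        show ContinuousOn (fun z =>
            (Pprod γ (k+1))⁻¹ * (Real.log (‖((fwd γ (k+1) z).2)‖)
              - Real.log (‖(γ (k:ℤ)).p.leadingCoeff‖)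
              - ((γ (k:ℤ)).p.natDegree : ℝ) * Real.log (‖((fwd γ k z).2)‖))) (VPlus R)
        exact continuousOn_const.mul
          (((hlogc (k+1)).sub continuousOn_const).sub
            (continuousOn_const.mul (hlogc k)))
      · exact summable_half_pow CE
      · intro k z hz
        simpa [Real.norm_eq_abs] using (hEk z hz k).1
    · -- boundedness
      intro z hz
      exact (tsum_bound CE (fun k => (hEk z hz k).1)).1
    · -- the expansion formula
      intro z hz
      have hse : Summable (fun k => eterm γ k z) :=
        (tsum_bound CE fun k => (hEk z hz k).1).2
      have hpart : ∀ n, GPlusN γ n z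
          = Real.log (‖z.2‖)
            + ∑ k ∈ Finset.range n, (cterm γ k + eterm γ k z) := by
        intro n
        rw [GPlusN_eq_log γ R hR n z (horb z hz n).1]
        have htel : ∑ k ∈ Finset.range n, (cterm γ k + eterm γ k z)
            = (Pprod γ n)⁻¹ * Real.log (‖((fwd γ n z).2)‖)
              - (Pprod γ 0)⁻¹ * Real.log (‖((fwd γ 0 z).2)‖) := by
          rw [← Finset.sum_range_sub
            (fun k => (Pprod γ k)⁻¹ * Real.log (‖((fwd γ k z).2)‖)) n]
          exact Finset.sum_congr rfl fun k _ => step_eq γ hdeg k z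
        rw [htel]
        have h0 : Pprod γ 0 = 1 := by simp [Pprod]
        have h1 : fwd γ 0 z = z := rfl
        rw [h0, h1]
        ring
      have h2 : Tendsto (fun n => ∑ k ∈ Finset.range n, (cterm γ k + eterm γ k z))
          atTop (nhds ((∑' k, cterm γ k) + ∑' k, eterm γ k z)) :=
        (hsc.hasSum.add hse.hasSum).tendsto_sum_nat
      have h3 : Tendsto (fun n => GPlusN γ n z) atTop
          (nhds (Real.log (‖z.2‖) + ((∑' k, cterm γ k) + ∑' k, eterm γ k z))) := by
        have hfe : (fun n => GPlusN γ n z)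
            = fun n => Real.log (‖z.2‖)
              + ∑ k ∈ Finset.range n, (cterm γ k + eterm γ k z) := funext hpart
        rw [hfe]
        exact tendsto_const_nhds.add h2
      have := tendsto_nhds_unique (hG γ hγ z) h3
      rw [this]; ring
    · -- vanishing at infinity
      intro ε hε
      refine ⟨max W (4*(K/m)/ε), lt_of_lt_of_le hW0 (le_max_left _ _), ?_⟩
      intro z hz hT
      have hWz : W ≤ ‖z.2‖ := le_of_lt (lt_of_le_of_lt (le_max_left _ _) hT)
      have hz2 : 0 < ‖z.2‖ := lt_of_lt_of_le hW0 hWz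
      have hb := (tsum_bound (2*(K/m)/‖z.2‖)
        (fun k => (hEk z hz k).2 hWz)).1
      have hTz : 4*(K/m)/ε < ‖z.2‖ := lt_of_le_of_lt (le_max_right _ _) hT
      have h4 : (4*(K/m))/‖z.2‖ < ε := by
        rw [div_lt_iff₀ hz2]
        rw [div_lt_iff₀ hε] at hTz
        linarith
      calc |∑' k, eterm γ k z| ≤ 2*(2*(K/m)/‖z.2‖) := hb
        _ = (4*(K/m))/‖z.2‖ := by ring
        _ < ε := h4
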